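/- Let A be a finite set of positive integers with maximum a_m, let x be a real number with x ∉ a_m ℤ, and let S ⊆ A. Let Γ(S) be the set of integers b with x < b < x + 2a_m such that some a ∈ S divides b. Then |Γ(S)| ≥ 2√|S|. -/

import Mathlib

/-- If `x` is not an integer multiple of `max A`, then for any `S ⊆ A` the set `Γ(S)`
of integers in `(x, x + 2 max A)` divisible by some element of `S` satisfies
`|Γ(S)| ≥ 2√|S|`. -/
theorem neighbourhood_lower_bound (A : Finset ℕ) (hA : A.Nonempty)
    (hpos : ∀ a ∈ A, 0 < a)
    (x : ℝ) (hx : ¬ ∃ k : ℤ, x = (k : ℝ) * (A.max' hA : ℕ))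
    (S : Finset ℕ) (hS : S ⊆ A) :
    2 * Real.sqrt S.card ≤
      ({b : ℤ | x < (b : ℝ) ∧ (b : ℝ) < x + 2 * (A.max' hA : ℕ) ∧
        ∃ a ∈ S, (a : ℤ) ∣ b}.ncard : ℝ) := by
  classical
  set m := A.max' hA with hm_def
  have hm_pos : 0 < m := hpos _ (A.max'_mem hA)
  have hle : ∀ a ∈ S, a ≤ m := fun a ha => A.le_max' a (hS ha)
  have hSpos : ∀ a ∈ S, 0 < a := fun a ha => hpos a (hS ha)
  set T : Set ℤ := {b : ℤ | x < (b : ℝ) ∧ (b : ℝ) < x + 2 * (m : ℕ) ∧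
      ∃ a ∈ S, (a : ℤ) ∣ b} with hT_def
  have hTfin : T.Finite := by
    apply Set.Finite.subset (Set.finite_Icc ⌈x⌉ ⌊x + 2 * ((m : ℕ) : ℝ)⌋)
    rintro b ⟨h1, h2, -⟩
    exact ⟨Int.ceil_le.2 h1.le, Int.le_floor.2 h2.le⟩
  set Γf : Finset ℤ := hTfin.toFinset with hΓf
  have hncard : T.ncard = Γf.card := Set.ncard_eq_toFinset_card T hTfin
  -- the map
  set u : ℕ → ℤ := fun a => (a : ℤ) * ⌊(x + (m : ℝ)) / (a : ℝ)⌋ with hu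
  have key : ∀ a ∈ S, ((u a : ℝ) ≤ x + m ∧ x + (m : ℝ) - a < u a) ∧
      ((u a : ℝ) + a < x + 2 * m) := by
    intro a ha
    have hap : (0 : ℝ) < a := by exact_mod_cast hSpos a ha
    have ham : (a : ℝ) ≤ m := by exact_mod_cast hle a ha
    have hfl : ((⌊(x + (m : ℝ)) / (a : ℝ)⌋ : ℝ)) ≤ (x + (m : ℝ)) / (a : ℝ) :=
      Int.floor_le _
    have hfl2 : (x + (m : ℝ)) / (a : ℝ) - 1 < (⌊(x + (m : ℝ)) / (a : ℝ)⌋ : ℝ) :=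
      Int.sub_one_lt_floor _
    have hux : (u a : ℝ) = (a : ℝ) * (⌊(x + (m : ℝ)) / (a : ℝ)⌋ : ℝ) := by
      simp [hu]
    have h1 : (u a : ℝ) ≤ x + m := by
      rw [hux]
      calc (a : ℝ) * (⌊(x + (m : ℝ)) / (a : ℝ)⌋ : ℝ) ≤ (a : ℝ) * ((x + (m : ℝ)) / (a : ℝ)) := by
            exact mul_le_mul_of_nonneg_left hfl hap.le
        _ = x + m := by field_simp
    have h2 : x + (m : ℝ) - a < u a := by
      rw [hux]
      have := mul_lt_mul_of_pos_left hfl2 hap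
      calc x + (m : ℝ) - a = (a : ℝ) * ((x + (m : ℝ)) / (a : ℝ) - 1) := by field_simp
        _ < (a : ℝ) * (⌊(x + (m : ℝ)) / (a : ℝ)⌋ : ℝ) := this
    refine ⟨⟨h1, h2⟩, ?_⟩
    -- strict upper bound
    rcases lt_or_eq_of_le ham with hlt | heq
    · nlinarith
    · -- a = m; need u a < x + m strictly
      have hne : (u a : ℝ) ≠ x + m := by
        intro hcontra
        apply hx
        refine ⟨⌊(x + (m : ℝ)) / (a : ℝ)⌋ - 1, ?_⟩
        have heq2 : (a : ℝ) * (⌊(x + (m : ℝ)) / (a : ℝ)⌋ : ℝ) = x + m := by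
          rw [← hux]; exact hcontra
        have heq3 : (a : ℝ) * (⌊(x + (m : ℝ)) / (a : ℝ)⌋ : ℝ)
            = (m : ℝ) * (⌊(x + (m : ℝ)) / (a : ℝ)⌋ : ℝ) := by rw [heq]
        push_cast
        linarith
      have : (u a : ℝ) < x + m := lt_of_le_of_ne h1 hne
      nlinarith
  have hmemL : ∀ a ∈ S, u a ∈ Γf ∧ (u a : ℝ) ≤ x + m := by
    intro a ha
    obtain ⟨⟨h1, h2⟩, h3⟩ := key a ha
    have ham : (a : ℝ) ≤ m := by exact_mod_cast hle a ha
    have hm1 : (1 : ℝ) ≤ m := by exact_mod_cast hm_pos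
    refine ⟨?_, h1⟩
    rw [hΓf, Set.Finite.mem_toFinset]
    refine ⟨by nlinarith, by nlinarith, a, ha, ⟨_, rfl⟩⟩
  have hmemR : ∀ a ∈ S, (u a + a) ∈ Γf ∧ x + (m : ℝ) < ((u a + a : ℤ) : ℝ) := by
    intro a ha
    obtain ⟨⟨h1, h2⟩, h3⟩ := key a ha
    have hm1 : (1 : ℝ) ≤ m := by exact_mod_cast hm_pos
    have hmem : (u a + (a : ℤ)) ∈ Γf := by
      rw [hΓf, Set.Finite.mem_toFinset]
      refine ⟨by push_cast; nlinarith, by push_cast at h3 ⊢; nlinarith, a, ha, ?_⟩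
      exact dvd_add ⟨_, rfl⟩ dvd_rfl
    exact ⟨hmem, by push_cast; nlinarith⟩
  -- split Γf
  set L := Γf.filter (fun b : ℤ => (b : ℝ) ≤ x + (m : ℝ)) with hL
  set R := Γf.filter (fun b : ℤ => ¬ ((b : ℝ) ≤ x + (m : ℝ))) with hR
  have hLR : L.card + R.card = Γf.card := by
    rw [hL, hR]
    exact Finset.card_filter_add_card_filter_not (p := fun b : ℤ => (b : ℝ) ≤ x + (m : ℝ))
  have hinj : S.card ≤ (L ×ˢ R).card := by
    refine Finset.card_le_card_of_injOn (fun a => (u a, u a + a)) ?_ ?_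
    · intro a ha
      rw [Finset.mem_coe, Finset.mem_product]
      constructor
      · rw [hL, Finset.mem_filter]; exact ⟨(hmemL a ha).1, (hmemL a ha).2⟩
      · rw [hR, Finset.mem_filter]
        exact ⟨(hmemR a ha).1, not_le.2 (hmemR a ha).2⟩
    · intro a _ a' _ h
      have h1 : u a = u a' := congrArg Prod.fst h
      have h2 : u a + (a : ℤ) = u a' + (a' : ℤ) := congrArg Prod.snd h
      have : (a : ℤ) = a' := by omega
      exact_mod_cast this
  rw [Finset.card_product] at hinj
  have hcard : (4 : ℤ) * S.card ≤ (Γf.card : ℤ) ^ 2 := by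
    have h1 : (S.card : ℤ) ≤ (L.card : ℤ) * R.card := by exact_mod_cast hinj
    have h2 : (L.card : ℤ) + R.card = Γf.card := by exact_mod_cast hLR
    nlinarith [sq_nonneg ((L.card : ℤ) - R.card)]
  -- conclude
  have hk : (4 : ℝ) * S.card ≤ (Γf.card : ℝ) ^ 2 := by exact_mod_cast hcard
  have hs0 : (0 : ℝ) ≤ (S.card : ℝ) := Nat.cast_nonneg _
  have hsq : Real.sqrt S.card ^ 2 = S.card := Real.sq_sqrt hs0
  have hk0 : (0 : ℝ) ≤ (Γf.card : ℝ) := Nat.cast_nonneg _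
  have : 2 * Real.sqrt S.card ≤ (Γf.card : ℝ) := by
    nlinarith [Real.sqrt_nonneg (S.card : ℝ)]
  calc 2 * Real.sqrt S.card ≤ (Γf.card : ℝ) := this
    _ = (T.ncard : ℝ) := by rw [hncard]
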